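/- Let (M,d) be a locally compact, separable metric space. Then d_{J'₁} is a metric on D'(ℝ₊, M_Δ): it is symmetric, satisfies the triangle inequality, and d_{J'₁}(X,Y) = 0 implies X = Y. -/

import Mathlib

open Filter Set
open scoped ENNReal NNReal Topology

/-- The distance on the one-point compactification `M_Δ` of a metric space `M`, with values in
`[0,∞]`: `d(x,Δ) = ∞` for `x ∈ M`, `d(Δ,Δ) = 0`, and the original (extended) distance on `M`. -/
noncomputable def distD {M : Type*} [MetricSpace M] (x y : OnePoint M) : ℝ≥0∞ :=
  match x, y with
  | none, none => 0
  | none, some _ => ⊤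
  | some _, none => ⊤
  | some a, some b => edist a b

/-- `kill_t(X)`: the path `X` killed at time `t ∈ [0,∞]`. -/
noncomputable def kill {M : Type*} (t : ℝ≥0∞) (X : ℝ≥0 → OnePoint M) : ℝ≥0 → OnePoint M :=
  fun s => if (s : ℝ≥0∞) < t then X s else OnePoint.infty

/-- The space `D'(ℝ₊, M_Δ)`: cadlag paths in the one-point compactification `M_Δ` that stay
in `M` before some (possibly infinite) explosion time `T` and equal `Δ` from time `T` on. -/
def DPrime (M : Type*) [MetricSpace M] : Set (ℝ≥0 → OnePoint M) :=
  {X | (∀ t, ContinuousWithinAt X (Set.Ici t) t) ∧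
       (∀ t : ℝ≥0, 0 < t → ∃ L, Filter.Tendsto X (nhdsWithin t (Set.Iio t)) (nhds L)) ∧
       (∃ T : ℝ≥0∞, (∀ t : ℝ≥0, (t : ℝ≥0∞) < T → X t ≠ OnePoint.infty) ∧
                    (∀ t : ℝ≥0, T ≤ (t : ℝ≥0∞) → X t = OnePoint.infty))}

/-- The set `Λ` of time changes: strictly increasing continuous `λ : [0,∞) → [0,∞)` with
`λ(0) = 0`. -/
def TimeChanges : Set (ℝ≥0 → ℝ≥0) := {l | StrictMono l ∧ Continuous l ∧ l 0 = 0}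

/-- The norm `‖λ‖†_t = 2 max(t,1) · sup_{0 ≤ s < u ≤ t} |log((λ(u)-λ(s))/(u-s))|`,
with values in `[0,∞]`. -/
noncomputable def dagNorm (l : ℝ≥0 → ℝ≥0) (t : ℝ) : ℝ≥0∞ :=
  ENNReal.ofReal (2 * max t 1) *
    ⨆ p ∈ {p : ℝ≥0 × ℝ≥0 | p.1 < p.2 ∧ (p.2 : ℝ) ≤ t},
      ENNReal.ofReal |Real.log (((l p.2 : ℝ) - (l p.1 : ℝ)) / ((p.2 : ℝ) - (p.1 : ℝ)))|

/-- The quantity `a_ε(X,Y)` entering the definition of the extended Skorohod metric. -/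
noncomputable def aDist {M : Type*} [MetricSpace M] (ε : ℝ) (X Y : ℝ≥0 → OnePoint M) :
    ℝ≥0∞ :=
  ⨅ t ∈ {t : ℝ≥0 | |(t : ℝ) - ε⁻¹| ≤ ε}, ⨅ l ∈ TimeChanges,
    max (dagNorm l (ε + ε⁻¹))
      (⨆ s ∈ {s : ℝ≥0 | (s : ℝ) ≤ ε + ε⁻¹},
        distD (kill (ENNReal.ofReal ε⁻¹) X s) (kill (t : ℝ≥0∞) Y (l s)))

/-- The extended Skorohod `J₁`-distance `d_{J'₁}` on `D'(ℝ₊, M_Δ)`, with the convention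
`inf ∅ = 1/2`. -/
noncomputable def dJ {M : Type*} [MetricSpace M] (X Y : ℝ≥0 → OnePoint M) : ℝ :=
  sInf ({ε : ℝ | ε ∈ Set.Ioo (0 : ℝ) (1 / 2) ∧
    max (aDist ε X Y) (aDist ε Y X) < ENNReal.ofReal (ε / 2)} ∪ {1 / 2})

set_option maxHeartbeats 1000000

lemma distD_comm' {M : Type*} [MetricSpace M] (x y : OnePoint M) : distD x y = distD y x := by
  cases x <;> cases y <;> simp [distD, edist_comm]

lemma distD_triangle {M : Type*} [MetricSpace M] (x y z : OnePoint M) :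
    distD x z ≤ distD x y + distD y z := by
  cases x <;> cases y <;> cases z <;> simp [distD, edist_triangle]

lemma distD_some_ne_top {M : Type*} [MetricSpace M] {a : M} {y : OnePoint M}
    (h : distD (OnePoint.some a) y ≠ ⊤) :
    ∃ b, y = OnePoint.some b ∧ edist a b = distD (OnePoint.some a) y := by
  cases y with
  | infty => simp [distD] at h
  | coe b => exact ⟨b, rfl, rfl⟩

lemma distD_infty_ne_top {M : Type*} [MetricSpace M] {y : OnePoint M}
    (h : distD OnePoint.infty y ≠ ⊤) : y = OnePoint.infty := by
  cases y with
  | infty => rfl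
  | coe b => simp [distD, OnePoint.infty] at h

lemma log_abs_bounds {r δ : ℝ} (hr : 0 < r) (hδ : δ ≤ 1/2) (h : |Real.log r| ≤ δ) :
    1 - δ ≤ r ∧ r ≤ 1 + 2*δ := by
  have hδ0 : 0 ≤ δ := le_trans (abs_nonneg _) h
  have hlo : -δ ≤ Real.log r := neg_le_of_abs_le h
  have hhi : Real.log r ≤ δ := le_of_abs_le h
  constructor
  · have h1 : Real.exp (-δ) ≤ r := by
      calc Real.exp (-δ) ≤ Real.exp (Real.log r) := Real.exp_le_exp.mpr hlo
        _ = r := Real.exp_log hr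
    have h2 : 1 - δ ≤ Real.exp (-δ) := by
      have := Real.add_one_le_exp (-δ); linarith
    linarith
  · have h1 : r ≤ Real.exp δ := by
      calc r = Real.exp (Real.log r) := (Real.exp_log hr).symm
        _ ≤ Real.exp δ := Real.exp_le_exp.mpr hhi
    have h2 : Real.exp δ ≤ 1 + 2*δ := by
      have h3 := Real.add_one_le_exp (-δ)
      have h4 : 0 < 1 - δ := by linarith
      have h5 : Real.exp δ = 1 / Real.exp (-δ) := by
        rw [Real.exp_neg, one_div, inv_inv]
      have h6 : Real.exp δ ≤ 1 / (1 - δ) := by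
        rw [h5]
        apply div_le_div_of_nonneg_left one_pos.le (lt_of_lt_of_le h4 (by linarith)) (by linarith)
      calc Real.exp δ ≤ 1/(1-δ) := h6
        _ ≤ 1 + 2*δ := by
          rw [div_le_iff₀ h4]; nlinarith
    linarith

lemma slope_log_bound {l : ℝ≥0 → ℝ≥0} {e : ℝ} (he : 0 < e)
    (hl : dagNorm l (e + e⁻¹) < ENNReal.ofReal (e/2)) :
    ∀ p q : ℝ≥0, p < q → (q : ℝ) ≤ e + e⁻¹ →
      |Real.log (((l q : ℝ) - (l p : ℝ)) / ((q : ℝ) - (p : ℝ)))| ≤ e^2/4 := by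
  intro p q hpq hqw
  set w : ℝ := e + e⁻¹ with hw
  have hwpos : (0:ℝ) < 2 * max w 1 := by positivity
  have hc0 : ENNReal.ofReal (2 * max w 1) ≠ 0 := by
    simp [ENNReal.ofReal_eq_zero, not_le, hwpos]
  have hc0' : ENNReal.ofReal (2 * max w 1) ≠ ⊤ := ENNReal.ofReal_ne_top
  have hsup : (⨆ p ∈ {p : ℝ≥0 × ℝ≥0 | p.1 < p.2 ∧ (p.2 : ℝ) ≤ w},
      ENNReal.ofReal |Real.log (((l p.2 : ℝ) - (l p.1 : ℝ)) / ((p.2 : ℝ) - (p.1 : ℝ)))|)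
      < ENNReal.ofReal (e/2) / ENNReal.ofReal (2 * max w 1) := by
    rw [ENNReal.lt_div_iff_mul_lt (Or.inl hc0) (Or.inl hc0'), mul_comm]
    exact hl
  have hmem : (p, q) ∈ {p : ℝ≥0 × ℝ≥0 | p.1 < p.2 ∧ (p.2 : ℝ) ≤ w} := ⟨hpq, hqw⟩
  have hterm := lt_of_le_of_lt (le_iSup₂ (f := fun (r : ℝ≥0 × ℝ≥0) (_ : r ∈ _) =>
      ENNReal.ofReal |Real.log (((l r.2 : ℝ) - (l r.1 : ℝ)) / ((r.2 : ℝ) - (r.1 : ℝ)))|)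
      (p, q) hmem) hsup
  rw [← ENNReal.ofReal_div_of_pos hwpos] at hterm
  have hq : (0:ℝ) < e / 2 / (2 * max w 1) := by positivity
  have h1 : |Real.log (((l q : ℝ) - (l p : ℝ)) / ((q : ℝ) - (p : ℝ)))| < e / 2 / (2 * max w 1) :=
    (ENNReal.ofReal_lt_ofReal_iff hq).mp hterm
  refine le_trans h1.le ?_
  have hinv : e⁻¹ ≤ max w 1 := le_trans (by simp only [hw]; nlinarith) (le_max_left _ _)
  calc e / 2 / (2 * max w 1) ≤ e / 2 / (2 * e⁻¹) := by
        apply div_le_div_of_nonneg_left (by positivity) (by positivity)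
        nlinarith [inv_pos.mpr he]
    _ = e^2/4 := by field_simp; ring

lemma slope_bounds {l : ℝ≥0 → ℝ≥0} {e : ℝ} (hl : StrictMono l) (he : 0 < e) (he' : e < 1/2)
    (hd : dagNorm l (e + e⁻¹) < ENNReal.ofReal (e/2)) :
    ∀ p q : ℝ≥0, p < q → (q : ℝ) ≤ e + e⁻¹ →
      (1 - e^2/4) * ((q:ℝ) - (p:ℝ)) ≤ (l q : ℝ) - (l p : ℝ) ∧
      (l q : ℝ) - (l p : ℝ) ≤ (1 + 2*(e^2/4)) * ((q:ℝ) - (p:ℝ)) := by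
  intro p q hpq hqw
  have hlog := slope_log_bound he hd p q hpq hqw
  have hqp : (0:ℝ) < (q:ℝ) - (p:ℝ) := by
    have := (NNReal.coe_lt_coe.mpr hpq); linarith
  have hlq : (0:ℝ) < (l q : ℝ) - (l p : ℝ) := by
    have := (NNReal.coe_lt_coe.mpr (hl hpq)); linarith
  have hr : (0:ℝ) < ((l q : ℝ) - (l p : ℝ)) / ((q:ℝ) - (p:ℝ)) := by positivity
  have hδ : e^2/4 ≤ 1/2 := by nlinarith
  obtain ⟨hlo, hhi⟩ := log_abs_bounds hr hδ hlog
  rw [le_div_iff₀ hqp] at hlo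
  rw [div_le_iff₀ hqp] at hhi
  constructor <;> linarith

lemma slope_bounds0 {l : ℝ≥0 → ℝ≥0} {e : ℝ} (hl : l ∈ TimeChanges) (he : 0 < e) (he' : e < 1/2)
    (hd : dagNorm l (e + e⁻¹) < ENNReal.ofReal (e/2)) :
    ∀ q : ℝ≥0, (q : ℝ) ≤ e + e⁻¹ →
      (1 - e^2/4) * (q:ℝ) ≤ (l q : ℝ) ∧ (l q : ℝ) ≤ (1 + 2*(e^2/4)) * (q:ℝ) := by
  intro q hqw
  rcases eq_or_lt_of_le (zero_le : (0:ℝ≥0) ≤ q) with h0 | h0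
  · simp [← h0, hl.2.2]
  · have := slope_bounds hl.1 he he' hd 0 q h0 hqw
    simpa [hl.2.2] using this

lemma exists_of_aDist_lt {M : Type*} [MetricSpace M] {ε : ℝ} {X Y : ℝ≥0 → OnePoint M}
    {c : ℝ≥0∞} (h : aDist ε X Y < c) :
    ∃ t : ℝ≥0, |(t : ℝ) - ε⁻¹| ≤ ε ∧ ∃ l, l ∈ TimeChanges ∧
      dagNorm l (ε + ε⁻¹) < c ∧
      (⨆ s ∈ {s : ℝ≥0 | (s : ℝ) ≤ ε + ε⁻¹},
        distD (kill (ENNReal.ofReal ε⁻¹) X s) (kill (t : ℝ≥0∞) Y (l s))) < c := by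
  rw [aDist, iInf_lt_iff] at h
  obtain ⟨t, ht⟩ := h
  rw [iInf_lt_iff] at ht
  obtain ⟨htmem, ht⟩ := ht
  rw [iInf_lt_iff] at ht
  obtain ⟨l, hl⟩ := ht
  rw [iInf_lt_iff] at hl
  obtain ⟨hlmem, hl⟩ := hl
  rw [max_lt_iff] at hl
  exact ⟨t, htmem, l, hlmem, hl.1, hl.2⟩

lemma aDist_le {M : Type*} [MetricSpace M] {ε : ℝ} {X Y : ℝ≥0 → OnePoint M}
    {t : ℝ≥0} (ht : |(t : ℝ) - ε⁻¹| ≤ ε) {l : ℝ≥0 → ℝ≥0} (hl : l ∈ TimeChanges) :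
    aDist ε X Y ≤ max (dagNorm l (ε + ε⁻¹))
      (⨆ s ∈ {s : ℝ≥0 | (s : ℝ) ≤ ε + ε⁻¹},
        distD (kill (ENNReal.ofReal ε⁻¹) X s) (kill (t : ℝ≥0∞) Y (l s))) :=
  iInf₂_le_of_le t ht (iInf₂_le l hl)

lemma coe_lt_ofReal_iff (s : ℝ≥0) (x : ℝ) : (s : ℝ≥0∞) < ENNReal.ofReal x ↔ (s:ℝ) < x := by
  rw [show ((s:ℝ≥0∞)) = ENNReal.ofReal (s:ℝ) from (ENNReal.ofReal_coe_nnreal).symm]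
  exact ENNReal.ofReal_lt_ofReal_iff_of_nonneg s.coe_nonneg

lemma aDist_comp {M : Type*} [MetricSpace M] {X Y Z : ℝ≥0 → OnePoint M} {e1 e2 : ℝ}
    (he1 : 0 < e1) (he1' : e1 < 1/2) (he2 : 0 < e2) (he2' : e2 < 1/2) (hee : e1 + e2 < 1/2)
    (hXY : aDist e1 X Y < ENNReal.ofReal (e1/2))
    (hYZ : aDist e2 Y Z < ENNReal.ofReal (e2/2)) :
    aDist (e1+e2) X Z < ENNReal.ofReal ((e1+e2)/2) := by
  obtain ⟨t1, ht1, l1, hl1, hd1, hs1⟩ := exists_of_aDist_lt hXY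
  obtain ⟨t2, ht2, l2, hl2, hd2, hs2⟩ := exists_of_aDist_lt hYZ
  set e : ℝ := e1 + e2 with hedef
  have he : 0 < e := by positivity
  have he' : e < 1/2 := hee
  have hie : e * e⁻¹ = 1 := mul_inv_cancel₀ he.ne'
  have hi_pos : 0 < e⁻¹ := inv_pos.mpr he
  have hi1_pos : 0 < e1⁻¹ := inv_pos.mpr he1
  have hi2_pos : 0 < e2⁻¹ := inv_pos.mpr he2
  have hee1 : e⁻¹ ≤ e1⁻¹ := by
    apply inv_anti₀ he1; rw [hedef]; linarith
  have hee2 : e⁻¹ ≤ e2⁻¹ := by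
    apply inv_anti₀ he2; rw [hedef]; linarith
  have hgap2 : 4*e1 ≤ e2⁻¹ - e⁻¹ := by
    have hid : e2⁻¹ - e⁻¹ = e1 / (e * e2) := by field_simp; ring
    rw [hid, le_div_iff₀ (by positivity)]
    have h14 : e * e2 ≤ 1/4 := by nlinarith
    nlinarith [mul_le_mul_of_nonneg_left h14 he1.le]
  have hgap1 : 4*e2 ≤ e1⁻¹ - e⁻¹ := by
    have hid : e1⁻¹ - e⁻¹ = e2 / (e * e1) := by field_simp; ring
    rw [hid, le_div_iff₀ (by positivity)]
    have h14 : e * e1 ≤ 1/4 := by nlinarith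
    nlinarith [mul_le_mul_of_nonneg_left h14 he2.le]
  have heinv : e ≤ e⁻¹ := by nlinarith
  have hW1 : e + e⁻¹ ≤ e1 + e1⁻¹ := by linarith
  have hW2 : e + e⁻¹ ≤ e2 + e2⁻¹ := by linarith
  have hδ1pos : (0:ℝ) < e1^2/4 := by positivity
  have hδ2pos : (0:ℝ) < e2^2/4 := by positivity
  have hδ1small : e1^2/4 ≤ e1/8 := by nlinarith
  have hδ2small : e2^2/4 ≤ e2/8 := by nlinarith
  have he1e : e1 * e⁻¹ ≤ 1 := by
    calc e1 * e⁻¹ ≤ e * e⁻¹ := by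
          apply mul_le_mul_of_nonneg_right _ hi_pos.le
          rw [hedef]; linarith
      _ = 1 := hie
  have he2e : e2 * e⁻¹ ≤ 1 := by
    calc e2 * e⁻¹ ≤ e * e⁻¹ := by
          apply mul_le_mul_of_nonneg_right _ hi_pos.le
          rw [hedef]; linarith
      _ = 1 := hie
  have hδ1e : (e1^2/4) * e⁻¹ ≤ e1/4 := by
    have h := mul_le_mul_of_nonneg_left he1e (by linarith : (0:ℝ) ≤ e1/4)
    calc (e1^2/4) * e⁻¹ = (e1/4) * (e1 * e⁻¹) := by ring
      _ ≤ e1/4 := by linarith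
  have hδ2e : (e2^2/4) * e⁻¹ ≤ e2/4 := by
    have h := mul_le_mul_of_nonneg_left he2e (by linarith : (0:ℝ) ≤ e2/4)
    calc (e2^2/4) * e⁻¹ = (e2/4) * (e2 * e⁻¹) := by ring
      _ ≤ e2/4 := by linarith
  have hδ2e1 : (e2^2/4) * e1 ≤ e2/16 := by nlinarith
  -- slope bounds
  have hsl10 := slope_bounds0 hl1 he1 he1' hd1
  have hsl20 := slope_bounds0 hl2 he2 he2' hd2
  set c' : ℝ≥0 := Real.toNNReal e⁻¹ with hc'def
  have hc' : (c' : ℝ) = e⁻¹ := Real.coe_toNNReal _ hi_pos.le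
  set t : ℝ≥0 := min (l2 (l1 c')) (min t2 (l2 t1)) with htdef
  have ht1lo : e1⁻¹ - e1 ≤ (t1:ℝ) := by have := abs_le.mp ht1; linarith [this.1]
  have ht2lo : e2⁻¹ - e2 ≤ (t2:ℝ) := by have := abs_le.mp ht2; linarith [this.1]
  have hc'w1 : (c' : ℝ) ≤ e1 + e1⁻¹ := by rw [hc']; linarith
  have hl1c'_ub : (l1 c' : ℝ) ≤ e⁻¹ + e1/2 := by
    have h := (hsl10 c' hc'w1).2
    rw [hc'] at h
    have hexp : (1 + 2*(e1^2/4)) * e⁻¹ = e⁻¹ + 2*((e1^2/4)*e⁻¹) := by ring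
    rw [hexp] at h
    linarith
  have hl1c'_lb : e⁻¹ - e1/4 ≤ (l1 c' : ℝ) := by
    have h := (hsl10 c' hc'w1).1
    rw [hc'] at h
    have hexp : (1 - e1^2/4) * e⁻¹ = e⁻¹ - (e1^2/4)*e⁻¹ := by ring
    rw [hexp] at h
    linarith
  have hl1c'w2 : (l1 c' : ℝ) ≤ e2 + e2⁻¹ := by linarith
  have hδ2lc : (e2^2/4) * (l1 c' : ℝ) ≤ e2/4 + e2/32 := by
    have h := mul_le_mul_of_nonneg_left hl1c'_ub hδ2pos.le
    have hexp : (e2^2/4) * (e⁻¹ + e1/2) = (e2^2/4)*e⁻¹ + ((e2^2/4)*e1)/2 := by ring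
    rw [hexp] at h
    linarith
  -- upper bound on t
  have htub : (t:ℝ) ≤ e⁻¹ + e := by
    have h1 : (t:ℝ) ≤ (l2 (l1 c') : ℝ) := NNReal.coe_le_coe.mpr (min_le_left _ _)
    have h2 : (l2 (l1 c') : ℝ) ≤ (1+2*(e2^2/4)) * (l1 c' : ℝ) := (hsl20 _ hl1c'w2).2
    have h3 : (1+2*(e2^2/4)) * (l1 c' : ℝ) = (l1 c' : ℝ) + 2*((e2^2/4) * (l1 c':ℝ)) := by ring
    rw [h3] at h2
    rw [hedef]
    have : e1/2 + 2*(e2/4+e2/32) ≤ e1 + e2 := by linarith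
    linarith
  -- lower bound on t
  have htlb : e⁻¹ - e ≤ (t:ℝ) := by
    have hmin : (t:ℝ) = min ((l2 (l1 c')):ℝ) (min (t2:ℝ) ((l2 t1):ℝ)) := by
      rw [htdef]; push_cast; rfl
    have hlba : e⁻¹ - e ≤ ((l2 (l1 c')):ℝ) := by
      have h2 : (1-(e2^2/4)) * (l1 c' : ℝ) ≤ (l2 (l1 c') : ℝ) := (hsl20 _ hl1c'w2).1
      have h3 : (1-(e2^2/4)) * (l1 c' : ℝ) = (l1 c' : ℝ) - (e2^2/4) * (l1 c':ℝ) := by ring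
      rw [h3] at h2
      rw [hedef]
      linarith
    rw [hmin]
    apply le_min hlba
    apply le_min
    · rw [hedef]; linarith
    · rcases le_or_gt (l1 c') t1 with hcase | hcase
      · have h5 : ((l2 (l1 c')):ℝ) ≤ ((l2 t1):ℝ) := NNReal.coe_le_coe.mpr (hl2.1.monotone hcase)
        linarith
      · have ht1w2 : (t1 : ℝ) ≤ e2 + e2⁻¹ := by
          have := NNReal.coe_le_coe.mpr hcase.le
          linarith
        have h2 : (1-(e2^2/4)) * (t1 : ℝ) ≤ (l2 t1 : ℝ) := (hsl20 _ ht1w2).1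
        have h3 : (1-(e2^2/4)) * (t1 : ℝ) = (t1:ℝ) - (e2^2/4)*(t1:ℝ) := by ring
        rw [h3] at h2
        have h6 : (e2^2/4)*(t1:ℝ) ≤ e2/4 + e2/32 := by
          have h7 : (t1:ℝ) ≤ (l1 c' : ℝ) := (NNReal.coe_lt_coe.mpr hcase).le
          have h8 := mul_le_mul_of_nonneg_left (le_trans h7 hl1c'_ub) hδ2pos.le
          have hexp : (e2^2/4) * (e⁻¹ + e1/2) = (e2^2/4)*e⁻¹ + ((e2^2/4)*e1)/2 := by ring
          rw [hexp] at h8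
          linarith
        rw [hedef]
        linarith
  have htmem : |(t : ℝ) - e⁻¹| ≤ e := abs_le.mpr ⟨by linarith, by linarith⟩
  have hlcomp : (l2 ∘ l1) ∈ TimeChanges :=
    ⟨hl2.1.comp hl1.1, hl2.2.1.comp hl1.2.1, by simp [Function.comp, hl1.2.2, hl2.2.2]⟩
  -- l1 maps window into window2
  have hl1win : ∀ q : ℝ≥0, (q:ℝ) ≤ e + e⁻¹ → (l1 q : ℝ) ≤ e2 + e2⁻¹ := by
    intro q hq
    have hqw1 : (q:ℝ) ≤ e1 + e1⁻¹ := le_trans hq hW1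
    have h := (hsl10 q hqw1).2
    have h2 : (1 + 2*(e1^2/4)) * (q:ℝ) ≤ (1 + 2*(e1^2/4)) * (e+e⁻¹) :=
      mul_le_mul_of_nonneg_left hq (by positivity)
    have h3 : (1 + 2*(e1^2/4)) * (e+e⁻¹) = e + e⁻¹ + 2*((e1^2/4)*e) + 2*((e1^2/4)*e⁻¹) := by ring
    have h4 : (e1^2/4)*e ≤ e1/8 := by
      calc (e1^2/4)*e ≤ (e1/8)*e := mul_le_mul_of_nonneg_right hδ1small he.le
        _ ≤ (e1/8)*1 := mul_le_mul_of_nonneg_left (by linarith) (by linarith)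
        _ = e1/8 := by ring
    rw [h3] at h2
    linarith [hδ1e, h4]
  -- dagNorm bound for the composition
  have hdag : dagNorm (l2 ∘ l1) (e + e⁻¹) ≤ dagNorm l1 (e1+e1⁻¹) + dagNorm l2 (e2+e2⁻¹) := by
    rw [dagNorm, dagNorm, dagNorm]
    set S1 := ⨆ p ∈ {p : ℝ≥0 × ℝ≥0 | p.1 < p.2 ∧ (p.2 : ℝ) ≤ e1+e1⁻¹},
      ENNReal.ofReal |Real.log (((l1 p.2 : ℝ) - (l1 p.1 : ℝ)) / ((p.2 : ℝ) - (p.1 : ℝ)))| with hS1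
    set S2 := ⨆ p ∈ {p : ℝ≥0 × ℝ≥0 | p.1 < p.2 ∧ (p.2 : ℝ) ≤ e2+e2⁻¹},
      ENNReal.ofReal |Real.log (((l2 p.2 : ℝ) - (l2 p.1 : ℝ)) / ((p.2 : ℝ) - (p.1 : ℝ)))| with hS2
    have hsup : (⨆ p ∈ {p : ℝ≥0 × ℝ≥0 | p.1 < p.2 ∧ (p.2 : ℝ) ≤ e+e⁻¹},
        ENNReal.ofReal |Real.log ((((l2∘l1) p.2 : ℝ) - ((l2∘l1) p.1 : ℝ)) / ((p.2 : ℝ) - (p.1 : ℝ)))|)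
        ≤ S1 + S2 := by
      apply iSup₂_le
      rintro ⟨p, q⟩ ⟨hpq, hqw⟩
      simp only [Function.comp_apply]
      have hqp : (0:ℝ) < (q:ℝ) - (p:ℝ) := by
        have := NNReal.coe_lt_coe.mpr hpq; linarith
      have hl1pq : l1 p < l1 q := hl1.1 hpq
      have hlqp : (0:ℝ) < (l1 q:ℝ) - (l1 p:ℝ) := by
        have := NNReal.coe_lt_coe.mpr hl1pq; linarith
      have hl2qp : (0:ℝ) < (l2 (l1 q):ℝ) - (l2 (l1 p):ℝ) := by
        have := NNReal.coe_lt_coe.mpr (hl2.1 hl1pq); linarith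
      have hsplit : ((l2 (l1 q) : ℝ) - (l2 (l1 p) : ℝ)) / ((q : ℝ) - (p : ℝ))
          = (((l2 (l1 q) : ℝ) - (l2 (l1 p) : ℝ)) / ((l1 q : ℝ) - (l1 p : ℝ)))
            * (((l1 q : ℝ) - (l1 p : ℝ)) / ((q : ℝ) - (p : ℝ))) := by
        field_simp
      rw [hsplit, Real.log_mul (by positivity) (by positivity)]
      refine le_trans (ENNReal.ofReal_le_ofReal (abs_add_le _ _)) ?_
      rw [ENNReal.ofReal_add (abs_nonneg _) (abs_nonneg _)]
      have hmemb2 : (l1 p, l1 q) ∈ {p : ℝ≥0 × ℝ≥0 | p.1 < p.2 ∧ (p.2 : ℝ) ≤ e2+e2⁻¹} :=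
        ⟨hl1pq, hl1win q hqw⟩
      have hmemb1 : (p, q) ∈ {p : ℝ≥0 × ℝ≥0 | p.1 < p.2 ∧ (p.2 : ℝ) ≤ e1+e1⁻¹} :=
        ⟨hpq, le_trans hqw hW1⟩
      have hm2 : ENNReal.ofReal |Real.log (((l2 (l1 q) : ℝ) - (l2 (l1 p) : ℝ)) / ((l1 q : ℝ) - (l1 p : ℝ)))| ≤ S2 := by
        rw [hS2]
        exact le_iSup₂ (f := fun (r : ℝ≥0 × ℝ≥0) (_ : r ∈ {p : ℝ≥0 × ℝ≥0 | p.1 < p.2 ∧ (p.2 : ℝ) ≤ e2+e2⁻¹}) =>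
          ENNReal.ofReal |Real.log (((l2 r.2 : ℝ) - (l2 r.1 : ℝ)) / ((r.2 : ℝ) - (r.1 : ℝ)))|)
          (l1 p, l1 q) hmemb2
      have hm1 : ENNReal.ofReal |Real.log (((l1 q : ℝ) - (l1 p : ℝ)) / ((q : ℝ) - (p : ℝ)))| ≤ S1 := by
        rw [hS1]
        exact le_iSup₂ (f := fun (r : ℝ≥0 × ℝ≥0) (_ : r ∈ {p : ℝ≥0 × ℝ≥0 | p.1 < p.2 ∧ (p.2 : ℝ) ≤ e1+e1⁻¹}) =>
          ENNReal.ofReal |Real.log (((l1 r.2 : ℝ) - (l1 r.1 : ℝ)) / ((r.2 : ℝ) - (r.1 : ℝ)))|)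
          (p, q) hmemb1
      calc ENNReal.ofReal |Real.log (((l2 (l1 q) : ℝ) - (l2 (l1 p) : ℝ)) / ((l1 q : ℝ) - (l1 p : ℝ)))|
            + ENNReal.ofReal |Real.log (((l1 q : ℝ) - (l1 p : ℝ)) / ((q : ℝ) - (p : ℝ)))|
          ≤ S2 + S1 := add_le_add hm2 hm1
        _ = S1 + S2 := add_comm _ _
    have hmax1 : ENNReal.ofReal (2 * max (e+e⁻¹) 1) ≤ ENNReal.ofReal (2 * max (e1+e1⁻¹) 1) :=
      ENNReal.ofReal_le_ofReal (mul_le_mul_of_nonneg_left (max_le_max hW1 le_rfl) (by norm_num))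
    have hmax2 : ENNReal.ofReal (2 * max (e+e⁻¹) 1) ≤ ENNReal.ofReal (2 * max (e2+e2⁻¹) 1) :=
      ENNReal.ofReal_le_ofReal (mul_le_mul_of_nonneg_left (max_le_max hW2 le_rfl) (by norm_num))
    calc ENNReal.ofReal (2 * max (e+e⁻¹) 1) * _ ≤ ENNReal.ofReal (2 * max (e+e⁻¹) 1) * (S1 + S2) :=
          mul_le_mul_right hsup _
      _ = ENNReal.ofReal (2 * max (e+e⁻¹) 1) * S1 + ENNReal.ofReal (2 * max (e+e⁻¹) 1) * S2 := by
          rw [mul_add]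
      _ ≤ ENNReal.ofReal (2 * max (e1+e1⁻¹) 1) * S1 + ENNReal.ofReal (2 * max (e2+e2⁻¹) 1) * S2 :=
          add_le_add (mul_le_mul_left hmax1 _) (mul_le_mul_left hmax2 _)
  -- pointwise bound for the sup term
  set A1 := (⨆ s ∈ {s : ℝ≥0 | (s : ℝ) ≤ e1 + e1⁻¹},
      distD (kill (ENNReal.ofReal e1⁻¹) X s) (kill (t1 : ℝ≥0∞) Y (l1 s))) with hA1
  set A2 := (⨆ s ∈ {s : ℝ≥0 | (s : ℝ) ≤ e2 + e2⁻¹},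
      distD (kill (ENNReal.ofReal e2⁻¹) Y s) (kill (t2 : ℝ≥0∞) Z (l2 s))) with hA2
  have hA1top : A1 ≠ ⊤ := hs1.ne_top
  have hA2top : A2 ≠ ⊤ := hs2.ne_top
  have hp1 : ∀ s : ℝ≥0, (s:ℝ) ≤ e1 + e1⁻¹ →
      distD (kill (ENNReal.ofReal e1⁻¹) X s) (kill (t1 : ℝ≥0∞) Y (l1 s)) ≤ A1 := by
    intro s hs
    rw [hA1]
    exact le_iSup₂ (f := fun (s : ℝ≥0) (_ : s ∈ {s : ℝ≥0 | (s : ℝ) ≤ e1 + e1⁻¹}) =>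
      distD (kill (ENNReal.ofReal e1⁻¹) X s) (kill (t1 : ℝ≥0∞) Y (l1 s))) s hs
  have hp2 : ∀ s : ℝ≥0, (s:ℝ) ≤ e2 + e2⁻¹ →
      distD (kill (ENNReal.ofReal e2⁻¹) Y s) (kill (t2 : ℝ≥0∞) Z (l2 s)) ≤ A2 := by
    intro s hs
    rw [hA2]
    exact le_iSup₂ (f := fun (s : ℝ≥0) (_ : s ∈ {s : ℝ≥0 | (s : ℝ) ≤ e2 + e2⁻¹}) =>
      distD (kill (ENNReal.ofReal e2⁻¹) Y s) (kill (t2 : ℝ≥0∞) Z (l2 s))) s hs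
  have hpoint : ∀ s : ℝ≥0, (s:ℝ) ≤ e + e⁻¹ →
      distD (kill (ENNReal.ofReal e⁻¹) X s) (kill (t:ℝ≥0∞) Z (l2 (l1 s))) ≤ A1 + A2 := by
    intro s hs
    by_cases hsc : (s:ℝ) < e⁻¹
    · -- s is before the cut
      have hksX : kill (ENNReal.ofReal e⁻¹) X s = X s := by
        simp only [kill]; rw [if_pos ((coe_lt_ofReal_iff s e⁻¹).mpr hsc)]
      have hsc' : s < c' := by rw [← NNReal.coe_lt_coe, hc']; exact hsc
      have hsw1 : (s:ℝ) ≤ e1+e1⁻¹ := by linarith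
      have hl1s_lt : (l1 s : ℝ) < e2⁻¹ := by
        have h := NNReal.coe_lt_coe.mpr (hl1.1 hsc')
        linarith
      have hl1sw2 : (l1 s : ℝ) ≤ e2+e2⁻¹ := by linarith
      have hksX1 : kill (ENNReal.ofReal e1⁻¹) X s = X s := by
        simp only [kill]; rw [if_pos ((coe_lt_ofReal_iff s e1⁻¹).mpr (by linarith))]
      have hksY2 : kill (ENNReal.ofReal e2⁻¹) Y (l1 s) = Y (l1 s) := by
        simp only [kill]; rw [if_pos ((coe_lt_ofReal_iff (l1 s) e2⁻¹).mpr hl1s_lt)]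
      have hXY1 : distD (X s) (kill (t1:ℝ≥0∞) Y (l1 s)) ≤ A1 := by
        rw [← hksX1]; exact hp1 s hsw1
      have hYZ2 : distD (Y (l1 s)) (kill (t2:ℝ≥0∞) Z (l2 (l1 s))) ≤ A2 := by
        rw [← hksY2]; exact hp2 (l1 s) hl1sw2
      rw [hksX]
      by_cases hzc : l2 (l1 s) < t
      · have h3 : l2 (l1 s) < t2 :=
          lt_of_lt_of_le hzc (le_trans (min_le_right _ _) (min_le_left _ _))
        have h4 : l1 s < t1 := by
          have h5 : l2 (l1 s) < l2 t1 :=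
            lt_of_lt_of_le hzc (le_trans (min_le_right _ _) (min_le_right _ _))
          exact hl2.1.lt_iff_lt.mp h5
        have hkt : kill (t:ℝ≥0∞) Z (l2 (l1 s)) = Z (l2 (l1 s)) := by
          simp only [kill]; rw [if_pos (ENNReal.coe_lt_coe.mpr hzc)]
        have hkt1 : kill (t1:ℝ≥0∞) Y (l1 s) = Y (l1 s) := by
          simp only [kill]; rw [if_pos (ENNReal.coe_lt_coe.mpr h4)]
        have hkt2 : kill (t2:ℝ≥0∞) Z (l2 (l1 s)) = Z (l2 (l1 s)) := by
          simp only [kill]; rw [if_pos (ENNReal.coe_lt_coe.mpr h3)]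
        rw [hkt]
        rw [hkt1] at hXY1
        rw [hkt2] at hYZ2
        calc distD (X s) (Z (l2 (l1 s)))
            ≤ distD (X s) (Y (l1 s)) + distD (Y (l1 s)) (Z (l2 (l1 s))) := distD_triangle _ _ _
          _ ≤ A1 + A2 := add_le_add hXY1 hYZ2
      · -- t ≤ l2 (l1 s): the Z-side is killed; show X s is dead too
        have hkt : kill (t:ℝ≥0∞) Z (l2 (l1 s)) = OnePoint.infty := by
          simp only [kill]; rw [if_neg (by rw [not_lt, ENNReal.coe_le_coe]; exact not_lt.mp hzc)]
        rw [hkt]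
        have ht_le : t ≤ l2 (l1 s) := not_lt.mp hzc
        have hXinfty : X s = OnePoint.infty := by
          rw [htdef] at ht_le
          rcases min_le_iff.mp ht_le with hA | hBC
          · exact absurd ((hl2.1.comp hl1.1).le_iff_le.mp hA) (not_le.mpr hsc')
          rcases min_le_iff.mp hBC with hB | hC
          · have hkt2 : kill (t2:ℝ≥0∞) Z (l2 (l1 s)) = OnePoint.infty := by
              simp only [kill]; rw [if_neg (by rw [not_lt, ENNReal.coe_le_coe]; exact hB)]
            rw [hkt2] at hYZ2
            have hY : Y (l1 s) = OnePoint.infty := by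
              have hne : distD (Y (l1 s)) OnePoint.infty ≠ ⊤ :=
                fun hcon => hA2top (top_le_iff.mp (hcon ▸ hYZ2))
              rw [distD_comm'] at hne; exact distD_infty_ne_top hne
            have hk1 : kill (t1:ℝ≥0∞) Y (l1 s) = OnePoint.infty := by
              simp only [kill]; split_ifs with h; exacts [hY, rfl]
            rw [hk1] at hXY1
            have hne : distD (X s) OnePoint.infty ≠ ⊤ :=
              fun hcon => hA1top (top_le_iff.mp (hcon ▸ hXY1))
            rw [distD_comm'] at hne; exact distD_infty_ne_top hne
          · have h4 : t1 ≤ l1 s := hl2.1.le_iff_le.mp hC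
            have hk1 : kill (t1:ℝ≥0∞) Y (l1 s) = OnePoint.infty := by
              simp only [kill]; rw [if_neg (by rw [not_lt, ENNReal.coe_le_coe]; exact h4)]
            rw [hk1] at hXY1
            have hne : distD (X s) OnePoint.infty ≠ ⊤ :=
              fun hcon => hA1top (top_le_iff.mp (hcon ▸ hXY1))
            rw [distD_comm'] at hne; exact distD_infty_ne_top hne
        rw [hXinfty]
        have : distD (OnePoint.infty : OnePoint M) OnePoint.infty = 0 := rfl
        rw [this]
        exact zero_le
    · -- s is past the cut: both sides are dead
      have h1 : kill (ENNReal.ofReal e⁻¹) X s = OnePoint.infty := by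
        simp only [kill]; rw [if_neg (by rw [coe_lt_ofReal_iff]; exact hsc)]
      have hc's : c' ≤ s := by
        rw [← NNReal.coe_le_coe, hc']; exact not_lt.mp hsc
      have h2 : kill (t:ℝ≥0∞) Z (l2 (l1 s)) = OnePoint.infty := by
        simp only [kill]
        rw [if_neg]
        rw [not_lt, ENNReal.coe_le_coe]
        exact le_trans (min_le_left _ _) ((hl2.1.comp hl1.1).monotone hc's)
      rw [h1, h2]
      have : distD (OnePoint.infty : OnePoint M) OnePoint.infty = 0 := rfl
      rw [this]
      exact zero_le
  have hsup_le : (⨆ s ∈ {s : ℝ≥0 | (s:ℝ) ≤ e+e⁻¹},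
      distD (kill (ENNReal.ofReal e⁻¹) X s) (kill (t:ℝ≥0∞) Z ((l2 ∘ l1) s))) ≤ A1 + A2 :=
    iSup₂_le fun s hs => hpoint s hs
  have hofadd : ENNReal.ofReal (e1/2) + ENNReal.ofReal (e2/2) = ENNReal.ofReal (e/2) := by
    rw [← ENNReal.ofReal_add (by linarith) (by linarith), hedef]
    ring_nf
  have hfin := aDist_le (X := X) (Y := Z) (ε := e) htmem hlcomp
  refine lt_of_le_of_lt hfin (max_lt ?_ ?_)
  · calc dagNorm (l2 ∘ l1) (e + e⁻¹) ≤ dagNorm l1 (e1+e1⁻¹) + dagNorm l2 (e2+e2⁻¹) := hdag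
      _ < ENNReal.ofReal (e1/2) + ENNReal.ofReal (e2/2) := ENNReal.add_lt_add hd1 hd2
      _ = ENNReal.ofReal (e/2) := hofadd
  · calc (⨆ s ∈ {s : ℝ≥0 | (s:ℝ) ≤ e+e⁻¹},
        distD (kill (ENNReal.ofReal e⁻¹) X s) (kill (t:ℝ≥0∞) Z ((l2 ∘ l1) s))) ≤ A1 + A2 := hsup_le
      _ < ENNReal.ofReal (e1/2) + ENNReal.ofReal (e2/2) := ENNReal.add_lt_add hs1 hs2
      _ = ENNReal.ofReal (e/2) := hofadd

lemma dJ_set_nonempty {M : Type*} [MetricSpace M] (X Y : ℝ≥0 → OnePoint M) :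
    ({ε : ℝ | ε ∈ Set.Ioo (0 : ℝ) (1 / 2) ∧
      max (aDist ε X Y) (aDist ε Y X) < ENNReal.ofReal (ε / 2)} ∪ {1 / 2}).Nonempty :=
  ⟨1/2, Set.mem_union_right _ rfl⟩

lemma dJ_set_bddBelow {M : Type*} [MetricSpace M] (X Y : ℝ≥0 → OnePoint M) :
    BddBelow ({ε : ℝ | ε ∈ Set.Ioo (0 : ℝ) (1 / 2) ∧
      max (aDist ε X Y) (aDist ε Y X) < ENNReal.ofReal (ε / 2)} ∪ {1 / 2}) := by
  refine ⟨0, ?_⟩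
  rintro x (⟨⟨h0, _⟩, _⟩ | hx)
  · exact h0.le
  · rw [Set.mem_singleton_iff] at hx; rw [hx]; norm_num

lemma dJ_nonneg {M : Type*} [MetricSpace M] (X Y : ℝ≥0 → OnePoint M) : 0 ≤ dJ X Y := by
  apply le_csInf (dJ_set_nonempty X Y)
  rintro x (⟨⟨h0, _⟩, _⟩ | hx)
  · exact h0.le
  · rw [Set.mem_singleton_iff] at hx; rw [hx]; norm_num

lemma dJ_le_half {M : Type*} [MetricSpace M] (X Y : ℝ≥0 → OnePoint M) : dJ X Y ≤ 1/2 :=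
  csInf_le (dJ_set_bddBelow X Y) (Set.mem_union_right _ rfl)

-- extraction of good ε from dJ = 0
lemma exists_good_eps {M : Type*} [MetricSpace M] {X Y : ℝ≥0 → OnePoint M}
    (h : dJ X Y = 0) {θ : ℝ} (hθ : 0 < θ) (hθ' : θ < 1/2) :
    ∃ ε : ℝ, 0 < ε ∧ ε < θ ∧ aDist ε X Y < ENNReal.ofReal (ε/2) := by
  have hlt : sInf ({ε : ℝ | ε ∈ Set.Ioo (0 : ℝ) (1 / 2) ∧
      max (aDist ε X Y) (aDist ε Y X) < ENNReal.ofReal (ε / 2)} ∪ {1 / 2}) < θ := by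
    rw [← dJ]; rw [h]; exact hθ
  obtain ⟨x, hx, hxθ⟩ := exists_lt_of_csInf_lt (dJ_set_nonempty X Y) hlt
  rcases hx with ⟨⟨h0, _⟩, hmax⟩ | hx
  · exact ⟨x, h0, hxθ, lt_of_le_of_lt (le_max_left _ _) hmax⟩
  · rw [Set.mem_singleton_iff] at hx
    rw [hx] at hxθ; linarith

-- The key single-scale approximation: points just right of s where X and Y almost meet.
lemma extract_approx {M : Type*} [MetricSpace M] {X Y : ℝ≥0 → OnePoint M}
    (h : dJ X Y = 0) (s : ℝ≥0) {γ : ℝ} (hγ : 0 < γ) :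
    ∃ u v : ℝ≥0, s ≤ u ∧ (u:ℝ) ≤ (s:ℝ) + γ ∧ s ≤ v ∧ (v:ℝ) ≤ (s:ℝ) + γ ∧
      distD (X u) (Y v) < ENNReal.ofReal γ := by
  set r : ℝ := (s:ℝ) with hrdef
  have hr0 : 0 ≤ r := s.coe_nonneg
  set θ : ℝ := min (γ/4) (min (1/(r+γ+2)) (1/4)) with hθdef
  have hθpos : 0 < θ := by
    apply lt_min (by positivity) (lt_min (by positivity) (by norm_num))
  have hθhalf : θ < 1/2 := by
    apply lt_of_le_of_lt (le_trans (min_le_right _ _) (min_le_right _ _)); norm_num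
  obtain ⟨e, he, heθ, ha⟩ := exists_good_eps h hθpos hθhalf
  have he2 : e < 1/2 := lt_trans heθ hθhalf
  obtain ⟨t, ht, l, hl, hd, hs⟩ := exists_of_aDist_lt ha
  have hie : 0 < e⁻¹ := inv_pos.mpr he
  have heγ : e < γ/4 := lt_of_lt_of_le heθ (min_le_left _ _)
  have herγ : e * (r+γ+2) < 1 := by
    have h1 : e < 1/(r+γ+2) := lt_of_lt_of_le heθ (le_trans (min_le_right _ _) (min_le_left _ _))
    rw [lt_div_iff₀ (by positivity)] at h1
    linarith
  have hrγe : r + γ + 1 < e⁻¹ := by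
    rw [← mul_lt_mul_iff_of_pos_right he, inv_mul_cancel₀ he.ne']
    nlinarith
  -- the slope corollary
  have hsl := slope_bounds hl.1 he he2 hd
  have hsl0 := slope_bounds0 hl he he2 hd
  -- choose u = s + η
  set η : ℝ := e^2 * (r+1) with hηdef
  have hηpos : 0 < η := by positivity
  have hηsmall : η ≤ e := by
    have h1 : e * (r+1) ≤ 1 := by nlinarith
    calc η = e * (e * (r+1)) := by rw [hηdef]; ring
      _ ≤ e * 1 := mul_le_mul_of_nonneg_left h1 he.le
      _ = e := mul_one e
  set u : ℝ≥0 := s + Real.toNNReal η with hudef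
  have hucoe : (u:ℝ) = r + η := by
    rw [hudef]; push_cast [Real.coe_toNNReal _ hηpos.le]; rfl
  have hsu : s < u := by
    rw [← NNReal.coe_lt_coe, hucoe]; linarith
  have huw : (u:ℝ) ≤ e + e⁻¹ := by
    rw [hucoe]
    have : η ≤ γ/4 := le_trans hηsmall heγ.le
    linarith
  have huγ : (u:ℝ) ≤ r + γ := by
    rw [hucoe]
    have : η ≤ γ/4 := le_trans hηsmall heγ.le
    linarith
  -- v = l u bounds
  have hlu_ub : (l u : ℝ) ≤ r + γ := by
    have h1 := (hsl0 u huw).2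
    have h2 : (1 + 2*(e^2/4)) * (u:ℝ) = (u:ℝ) + (e^2/2) * (u:ℝ) := by ring
    rw [h2] at h1
    have h3 : (e^2/2) * (u:ℝ) ≤ γ/2 := by
      have h4 : (u:ℝ) ≤ r + γ := huγ
      have h5 : e * (r + γ) ≤ 1 := by nlinarith
      have h6 : (e^2/2) * (u:ℝ) ≤ (e^2/2) * (r+γ) :=
        mul_le_mul_of_nonneg_left h4 (by positivity)
      have h7 : (e^2/2) * (r+γ) = (e/2) * (e * (r+γ)) := by ring
      rw [h7] at h6
      have h8 : (e/2) * (e * (r+γ)) ≤ (e/2) * 1 := by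
        apply mul_le_mul_of_nonneg_left h5 (by positivity)
      have h9 : e/2 ≤ γ/2 := by linarith
      linarith
    rw [hucoe] at h1 h3
    have hηγ : η ≤ γ/4 := le_trans hηsmall heγ.le
    linarith
  have hlu_gt : s < l u := by
    rw [← NNReal.coe_lt_coe]
    have hsw : (s:ℝ) ≤ e + e⁻¹ := le_trans (by rw [hucoe]; linarith : (s:ℝ) ≤ (u:ℝ)) huw
    have h1 := (hsl s u hsu huw).1
    have hsub : (u:ℝ) - (s:ℝ) = η := by rw [hucoe, ← hrdef]; ring
    rw [hsub] at h1
    have h2 := (hsl0 s hsw).1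
    rw [← hrdef] at h2 ⊢
    nlinarith [mul_nonneg (show (0:ℝ) ≤ e^2/4 by positivity) hr0,
      mul_nonneg (show (0:ℝ) ≤ 1/2 - e^2/4 by nlinarith) hηpos.le]
  -- kills are inactive at u and l u
  have hkX : kill (ENNReal.ofReal e⁻¹) X u = X u := by
    simp only [kill]
    rw [if_pos ((coe_lt_ofReal_iff u e⁻¹).mpr (by linarith))]
  have htlb : r + γ < (t:ℝ) := by
    have := abs_le.mp ht
    linarith [this.1]
  have hkY : kill (t:ℝ≥0∞) Y (l u) = Y (l u) := by
    simp only [kill]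
    rw [if_pos (ENNReal.coe_lt_coe.mpr (by rw [← NNReal.coe_lt_coe]; linarith))]
  have hpt : distD (kill (ENNReal.ofReal e⁻¹) X u) (kill (t:ℝ≥0∞) Y (l u)) < ENNReal.ofReal (e/2) := by
    refine lt_of_le_of_lt ?_ hs
    exact le_iSup₂ (f := fun (s : ℝ≥0) (_ : s ∈ {s : ℝ≥0 | (s : ℝ) ≤ e + e⁻¹}) =>
      distD (kill (ENNReal.ofReal e⁻¹) X s) (kill (t : ℝ≥0∞) Y (l s))) u huw
  rw [hkX, hkY] at hpt
  refine ⟨u, l u, hsu.le, huγ, hlu_gt.le, hlu_ub, ?_⟩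
  exact lt_of_lt_of_le hpt (ENNReal.ofReal_le_ofReal (by linarith))

lemma coe_eq_of_approx {M : Type*} [MetricSpace M] [LocallyCompactSpace M]
    {X Y : ℝ≥0 → OnePoint M} (s : ℝ≥0)
    (hXs : ContinuousWithinAt X (Set.Ici s) s) (hYs : ContinuousWithinAt Y (Set.Ici s) s)
    (u v : ℕ → ℝ≥0) (hu : ∀ n, s ≤ u n) (hv : ∀ n, s ≤ v n)
    (hut : Filter.Tendsto u atTop (𝓝 s)) (hvt : Filter.Tendsto v atTop (𝓝 s))
    (hd : ∀ n : ℕ, distD (X (u n)) (Y (v n)) < ENNReal.ofReal (1/(n+1)))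
    {a : M} (ha : X s = OnePoint.some a) : Y s = OnePoint.some a := by
  have huw : Filter.Tendsto u atTop (𝓝[Set.Ici s] s) :=
    tendsto_nhdsWithin_of_tendsto_nhds_of_eventually_within u hut (Filter.Eventually.of_forall hu)
  have hvw : Filter.Tendsto v atTop (𝓝[Set.Ici s] s) :=
    tendsto_nhdsWithin_of_tendsto_nhds_of_eventually_within v hvt (Filter.Eventually.of_forall hv)
  have hXu : Filter.Tendsto (fun n => X (u n)) atTop (𝓝 (X s)) := hXs.tendsto.comp huw
  have hYv : Filter.Tendsto (fun n => Y (v n)) atTop (𝓝 (Y s)) := hYs.tendsto.comp hvw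
  rw [ha] at hXu
  set A : ℕ → M := fun n => Option.getD (X (u n)) a with hA
  set B : ℕ → M := fun n => Option.getD (Y (v n)) a with hB
  have hmem : ∀ᶠ n in atTop, X (u n) ∈ Set.range (OnePoint.some : M → OnePoint M) :=
    hXu.eventually (Filter.eventually_of_mem
      (OnePoint.isOpen_range_coe.mem_nhds ⟨a, rfl⟩) fun y hy => hy)
  have hev : ∀ᶠ n in atTop, X (u n) = OnePoint.some (A n) := by
    refine hmem.mono fun n hn => ?_
    obtain ⟨x, hx⟩ := hn
    simp only [hA]
    rw [← hx]
    rfl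
  have hAa : Filter.Tendsto A atTop (𝓝 a) := by
    rw [(OnePoint.isOpenEmbedding_coe (X := M)).isEmbedding.tendsto_nhds_iff]
    exact hXu.congr' hev
  have hevB : ∀ᶠ n in atTop, Y (v n) = OnePoint.some (B n) ∧ dist (A n) (B n) < 1/(n+1) := by
    refine hev.mono fun n hn => ?_
    have hdn := hd n
    rw [hn] at hdn
    have hne : distD (OnePoint.some (A n)) (Y (v n)) ≠ ⊤ := hdn.ne_top
    obtain ⟨b, hb, hedist⟩ := distD_some_ne_top hne
    have hBn : B n = b := by simp only [hB]; rw [hb]; rfl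
    constructor
    · rw [hb, hBn]
    · rw [hBn, ← edist_lt_ofReal, hedist, hb]
      rw [hb] at hdn
      exact hdn
  have hAB0 : Filter.Tendsto (fun n => dist (A n) (B n)) atTop (𝓝 0) :=
    squeeze_zero' (Filter.Eventually.of_forall fun n => dist_nonneg)
      (hevB.mono fun n hn => hn.2.le) tendsto_one_div_add_atTop_nhds_zero_nat
  have hBa : Filter.Tendsto B atTop (𝓝 a) := by
    rw [tendsto_iff_dist_tendsto_zero]
    have hbound : ∀ n, dist (B n) a ≤ dist (A n) (B n) + dist (A n) a := fun n => by
      rw [dist_comm (A n) (B n)]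
      exact dist_triangle _ _ _
    have hsum : Filter.Tendsto (fun n => dist (A n) (B n) + dist (A n) a) atTop (𝓝 0) := by
      have := hAB0.add (tendsto_iff_dist_tendsto_zero.mp hAa)
      simpa using this
    exact squeeze_zero' (Filter.Eventually.of_forall fun n => dist_nonneg)
      (Filter.Eventually.of_forall hbound) hsum
  have hYlim : Filter.Tendsto (fun n => Y (v n)) atTop (𝓝 (OnePoint.some a)) := by
    have h1 : Filter.Tendsto (fun n => OnePoint.some (B n)) atTop (𝓝 (OnePoint.some a)) :=
      ((OnePoint.isOpenEmbedding_coe (X := M)).isEmbedding.tendsto_nhds_iff).mp hBa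
    have heq : (fun n => OnePoint.some (B n)) =ᶠ[atTop] (fun n => Y (v n)) := by
      filter_upwards [hevB] with n hn using hn.1.symm
    exact h1.congr' heq
  exact tendsto_nhds_unique hYv hYlim

lemma dJ_symm' {M : Type*} [MetricSpace M] (X Y : ℝ≥0 → OnePoint M) : dJ X Y = dJ Y X := by
  unfold dJ
  congr 1
  ext ε
  simp only [Set.mem_union, Set.mem_setOf_eq, Set.mem_singleton_iff]
  rw [max_comm (aDist ε X Y) (aDist ε Y X)]

lemma dJ_zero_eq {M : Type*} [MetricSpace M] [LocallyCompactSpace M]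
    {X Y : ℝ≥0 → OnePoint M} (hXp : X ∈ DPrime M) (hYp : Y ∈ DPrime M)
    (h : dJ X Y = 0) : X = Y := by
  have hXr : ∀ t, ContinuousWithinAt X (Set.Ici t) t := hXp.1
  have hYr : ∀ t, ContinuousWithinAt Y (Set.Ici t) t := hYp.1
  have h' : dJ Y X = 0 := by rw [dJ_symm']; exact h
  funext s
  -- approximating sequences in both directions
  have hseq : ∀ n : ℕ, ∃ u v : ℝ≥0, s ≤ u ∧ (u:ℝ) ≤ (s:ℝ) + 1/(n+1) ∧ s ≤ v ∧
      (v:ℝ) ≤ (s:ℝ) + 1/(n+1) ∧ distD (X u) (Y v) < ENNReal.ofReal (1/(n+1)) :=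
    fun n => extract_approx h s (by positivity)
  have hseq' : ∀ n : ℕ, ∃ u v : ℝ≥0, s ≤ u ∧ (u:ℝ) ≤ (s:ℝ) + 1/(n+1) ∧ s ≤ v ∧
      (v:ℝ) ≤ (s:ℝ) + 1/(n+1) ∧ distD (Y u) (X v) < ENNReal.ofReal (1/(n+1)) :=
    fun n => extract_approx h' s (by positivity)
  choose u v hu hub hv hvb hd using hseq
  choose u' v' hu' hub' hv' hvb' hd' using hseq'
  have htend : ∀ (w : ℕ → ℝ≥0), (∀ n, s ≤ w n) → (∀ n : ℕ, (w n : ℝ) ≤ (s:ℝ) + 1/(n+1)) →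
      Filter.Tendsto w atTop (𝓝 s) := by
    intro w hw hwb
    rw [← NNReal.tendsto_coe]
    have hlim : Filter.Tendsto (fun n : ℕ => (s:ℝ) + 1/(n+1)) atTop (𝓝 (s:ℝ)) := by
      have h2 := tendsto_one_div_add_atTop_nhds_zero_nat.const_add ((s:ℝ))
      simpa using h2
    exact tendsto_of_tendsto_of_tendsto_of_le_of_le tendsto_const_nhds hlim
      (fun n => NNReal.coe_le_coe.mpr (hw n)) hwb
  cases hxs : X s with
  | coe a =>
    have := coe_eq_of_approx s (hXr s) (hYr s) u v hu hv
      (htend u hu hub) (htend v hv hvb) hd (a := a) hxs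
    exact this.symm
  | infty =>
    cases hys : Y s with
    | coe b =>
      have := coe_eq_of_approx s (hYr s) (hXr s) u' v' hu' hv'
        (htend u' hu' hub') (htend v' hv' hvb') hd' (a := b) hys
      rw [hxs] at this
      exact this
    | infty => rfl

lemma dJ_triangle {M : Type*} [MetricSpace M] (X Y Z : ℝ≥0 → OnePoint M) :
    dJ X Z ≤ dJ X Y + dJ Y Z := by
  have key : ∀ a ∈ ({ε : ℝ | ε ∈ Set.Ioo (0 : ℝ) (1 / 2) ∧
        max (aDist ε X Y) (aDist ε Y X) < ENNReal.ofReal (ε / 2)} ∪ {1 / 2}),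
      ∀ b ∈ ({ε : ℝ | ε ∈ Set.Ioo (0 : ℝ) (1 / 2) ∧
        max (aDist ε Y Z) (aDist ε Z Y) < ENNReal.ofReal (ε / 2)} ∪ {1 / 2}),
      dJ X Z ≤ a + b := by
    rintro a (⟨⟨ha0, ha2⟩, hmaxa⟩ | ha) b hbm
    · rcases hbm with ⟨⟨hb0, hb2⟩, hmaxb⟩ | hb
      · rcases le_or_gt (1/2) (a+b) with hab | hab
        · exact le_trans (dJ_le_half X Z) hab
        · have h1 : aDist (a+b) X Z < ENNReal.ofReal ((a+b)/2) :=
            aDist_comp ha0 ha2 hb0 hb2 hab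
              (lt_of_le_of_lt (le_max_left _ _) hmaxa)
              (lt_of_le_of_lt (le_max_left _ _) hmaxb)
          have h2 : aDist (a+b) Z X < ENNReal.ofReal ((a+b)/2) := by
            have h3 := aDist_comp hb0 hb2 ha0 ha2 (by linarith)
              (lt_of_le_of_lt (le_max_right _ _) hmaxb)
              (lt_of_le_of_lt (le_max_right _ _) hmaxa)
            rw [add_comm b a] at h3
            exact h3
          apply csInf_le (dJ_set_bddBelow X Z)
          exact Set.mem_union_left _ ⟨⟨by linarith, hab⟩, max_lt h1 h2⟩
      · rw [Set.mem_singleton_iff] at hb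
        subst hb
        linarith [dJ_le_half X Z]
    · rw [Set.mem_singleton_iff] at ha
      subst ha
      have hb0 : 0 ≤ b := by
        rcases hbm with ⟨⟨hb0, _⟩, _⟩ | hb
        · exact hb0.le
        · rw [Set.mem_singleton_iff] at hb; rw [hb]; norm_num
      linarith [dJ_le_half X Z]
  have h1 : ∀ b ∈ ({ε : ℝ | ε ∈ Set.Ioo (0 : ℝ) (1 / 2) ∧
      max (aDist ε Y Z) (aDist ε Z Y) < ENNReal.ofReal (ε / 2)} ∪ {1 / 2}),
      dJ X Z - b ≤ dJ X Y := by
    intro b hb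
    apply le_csInf (dJ_set_nonempty X Y)
    intro a ha
    linarith [key a ha b hb]
  have h2 : dJ X Z - dJ X Y ≤ dJ Y Z := by
    apply le_csInf (dJ_set_nonempty Y Z)
    intro b hb
    linarith [h1 b hb]
  linarith

/-- (Proposition: `d_{J'₁}` is a metric on `D'(ℝ₊, M_Δ)` for a locally compact separable
metric space `M`: it is symmetric, satisfies the triangle inequality, and vanishes only on
the diagonal.) -/
theorem stmt12 {M : Type*} [MetricSpace M] [LocallyCompactSpace M]
    [TopologicalSpace.SeparableSpace M] :
    (∀ X ∈ DPrime M, ∀ Y ∈ DPrime M, dJ X Y = dJ Y X) ∧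
    (∀ X ∈ DPrime M, ∀ Y ∈ DPrime M, ∀ Z ∈ DPrime M, dJ X Z ≤ dJ X Y + dJ Y Z) ∧
    (∀ X ∈ DPrime M, ∀ Y ∈ DPrime M, dJ X Y = 0 → X = Y) :=
  ⟨fun X _ Y _ => dJ_symm' X Y, fun X _ Y _ Z _ => dJ_triangle X Y Z,
   fun _ hX _ hY h => dJ_zero_eq hX hY h⟩
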